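/- In the random-effects single-task model described in the context, with β̃ = β_λ(Ω) = (XᵀX + nλΩ⁻¹)⁻¹Xᵀy the oracle generalized ridge estimator, the predictive risk satisfies E[(x_newᵀβ̃ − y_new)²] = σ² + (λ²/p)·tr(Σ(Σ̂ + λΩ⁻¹)⁻¹Ω⁻¹(Σ̂ + λΩ⁻¹)⁻¹) − (λσ²/n)·tr(Σ(Σ̂ + λΩ⁻¹)⁻¹Ω⁻¹(Σ̂ + λΩ⁻¹)⁻¹) + (σ²/n)·tr(Σ(Σ̂ + λΩ⁻¹)⁻¹). -/

import Mathlib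

open Matrix MeasureTheory ProbabilityTheory

/-- The index family for the four random elements `(β̄, ε, x_new, ε_new)`. -/
noncomputable def quadFam (n p : ℕ) : Fin 4 → Type :=
  ![Fin p → ℝ, Fin n → ℝ, Fin p → ℝ, ℝ]

/-- The measurable-space structures on the four coordinates. -/
noncomputable def quadFamMeas (n p : ℕ) : ∀ i, MeasurableSpace (quadFam n p i) :=
  Fin.cons (inferInstance : MeasurableSpace (Fin p → ℝ))
    (Fin.cons (inferInstance : MeasurableSpace (Fin n → ℝ))
      (Fin.cons (inferInstance : MeasurableSpace (Fin p → ℝ))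
        (Fin.cons (inferInstance : MeasurableSpace ℝ) finZeroElim)))

/-- The four random elements `(β̄, ε, x_new, ε_new)` bundled as a dependent family. -/
def quadFun {W : Type*} {n p : ℕ} (B : W → Fin p → ℝ) (E : W → Fin n → ℝ)
    (xnew : W → Fin p → ℝ) (enew : W → ℝ) : ∀ i, W → quadFam n p i :=
  Fin.cons B (Fin.cons E (Fin.cons xnew (Fin.cons enew finZeroElim)))

/-- Product of two `L²` functions is integrable. -/
lemma l2mul_aux {W : Type*} [MeasurableSpace W] {μ : Measure W} {f g : W → ℝ}
    (hf : MemLp f 2 μ) (hg : MemLp g 2 μ) : Integrable (fun ω => f ω * g ω) μ := by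
  have h : MemLp (g • f) 1 μ := hf.smul hg
  exact (memLp_one_iff_integrable.mp h).congr (by filter_upwards with ω; simp [mul_comm])

lemma indep_int_mul_aux {W : Type*} [MeasurableSpace W] {μ : Measure W} {f g : W → ℝ}
    (h : IndepFun f g μ) (hf : Integrable f μ) (hg : Integrable g μ) :
    ∫ ω, f ω * g ω ∂μ = (∫ ω, f ω ∂μ) * ∫ ω, g ω ∂μ :=
  h.integral_fun_mul_eq_mul_integral hf.aestronglyMeasurable hg.aestronglyMeasurable

lemma sum_mul_eq_trace_aux {p : ℕ} (P Q : Matrix (Fin p) (Fin p) ℝ) (hQ : Qᵀ = Q) :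
    ∑ k, ∑ l, P k l * Q k l = Matrix.trace (P * Q) := by
  have hq : ∀ k l, Q l k = Q k l := fun k l => by rw [← Matrix.transpose_apply Q k l, hQ]
  rw [Matrix.trace]
  simp only [Matrix.diag, Matrix.mul_apply]
  exact Finset.sum_congr rfl fun k _ => Finset.sum_congr rfl fun l _ => by rw [hq]

lemma measurable_dotmul_aux {q r : ℕ} (P : Matrix (Fin q) (Fin r) ℝ) :
    Measurable (fun vw : (Fin q → ℝ) × (Fin r → ℝ) => vw.1 ⬝ᵥ P.mulVec vw.2) := by
  simp only [dotProduct, Matrix.mulVec]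
  apply Finset.measurable_sum
  intro i _
  apply Measurable.mul
  · exact (measurable_pi_apply i).comp measurable_fst
  · apply Finset.measurable_sum
    intro k _
    exact measurable_const.mul ((measurable_pi_apply k).comp measurable_snd)

lemma measurable_lin_aux {q : ℕ} (c : Fin q → ℝ) :
    Measurable (fun v : Fin q → ℝ => ∑ i, c i * v i) :=
  Finset.measurable_sum _ fun i _ => measurable_const.mul (measurable_pi_apply i)

/-- Main quadratic-form expectation computation. -/
lemma quad_helper_aux {W : Type*} [MeasurableSpace W] (μ : Measure W) [IsProbabilityMeasure μ]
    {q r : ℕ} (x : W → Fin q → ℝ) (u : W → Fin r → ℝ)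
    (hx2 : ∀ i, MemLp (fun ω => x ω i) 2 μ) (hu2 : ∀ k, MemLp (fun ω => u ω k) 2 μ)
    (hind : IndepFun x u μ)
    (S : Matrix (Fin q) (Fin q) ℝ) (T : Matrix (Fin r) (Fin r) ℝ)
    (hS : ∀ i j, ∫ ω, x ω i * x ω j ∂μ = S i j)
    (hT : ∀ k l, ∫ ω, u ω k * u ω l ∂μ = T k l)
    (P : Matrix (Fin q) (Fin r) ℝ) :
    Integrable (fun ω => (x ω ⬝ᵥ P.mulVec (u ω)) ^ 2) μ ∧
    ∫ ω, (x ω ⬝ᵥ P.mulVec (u ω)) ^ 2 ∂μ = ∑ k, ∑ l, (Pᵀ * S * P) k l * T k l := by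
  classical
  set g : Fin r → W → ℝ := fun k ω => ∑ i, P i k * x ω i with hg
  have hg2 : ∀ k, MemLp (g k) 2 μ := by
    intro k
    exact memLp_finset_sum _ (fun i _ => (hx2 i).const_mul (P i k))
  have hkey : ∀ ω, (x ω ⬝ᵥ P.mulVec (u ω)) ^ 2
      = ∑ k, ∑ l, (g k ω * g l ω) * (u ω k * u ω l) := by
    intro ω
    have h1 : x ω ⬝ᵥ P.mulVec (u ω) = ∑ k, g k ω * u ω k := by
      simp only [dotProduct, Matrix.mulVec, hg, Finset.mul_sum, Finset.sum_mul]
      rw [Finset.sum_comm]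
      exact Finset.sum_congr rfl fun k _ => Finset.sum_congr rfl fun i _ => by ring
    rw [h1, sq, Finset.sum_mul_sum]
    exact Finset.sum_congr rfl fun k _ => Finset.sum_congr rfl fun l _ => by ring
  have hindkl : ∀ k l, IndepFun (fun ω => g k ω * g l ω) (fun ω => u ω k * u ω l) μ := by
    intro k l
    have hφ : Measurable (fun v : Fin q → ℝ => (∑ i, P i k * v i) * (∑ i, P i l * v i)) :=
      (Finset.measurable_sum _ fun i _ => measurable_const.mul (measurable_pi_apply i)).mul
        (Finset.measurable_sum _ fun i _ => measurable_const.mul (measurable_pi_apply i))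
    have hψ : Measurable (fun w : Fin r → ℝ => w k * w l) :=
      (measurable_pi_apply k).mul (measurable_pi_apply l)
    exact hind.comp hφ hψ
  have hintg : ∀ k l, Integrable (fun ω => g k ω * g l ω) μ := fun k l =>
    l2mul_aux (hg2 k) (hg2 l)
  have hintu : ∀ k l, Integrable (fun ω => u ω k * u ω l) μ := fun k l =>
    l2mul_aux (hu2 k) (hu2 l)
  have hint : ∀ k l, Integrable (fun ω => (g k ω * g l ω) * (u ω k * u ω l)) μ := fun k l =>
    (hindkl k l).integrable_mul (hintg k l) (hintu k l)
  constructor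
  · exact (integrable_finset_sum _ fun k _ => integrable_finset_sum _ fun l _ => hint k l).congr
      (by filter_upwards with ω; rw [hkey ω])
  · have hgint : ∀ k l, ∫ ω, g k ω * g l ω ∂μ = (Pᵀ * S * P) k l := by
      intro k l
      have hexp : ∀ ω, g k ω * g l ω = ∑ i, ∑ j, (P i k * P j l) * (x ω i * x ω j) := by
        intro ω
        rw [hg]
        simp only []
        rw [Finset.sum_mul_sum]
        exact Finset.sum_congr rfl fun i _ => Finset.sum_congr rfl fun j _ => by ring
      calc ∫ ω, g k ω * g l ω ∂μ
          = ∫ ω, ∑ i, ∑ j, (P i k * P j l) * (x ω i * x ω j) ∂μ :=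
            integral_congr_ae (by filter_upwards with ω; rw [hexp ω])
        _ = ∑ i, ∑ j, (P i k * P j l) * S i j := by
            rw [integral_finset_sum _ fun i _ => integrable_finset_sum _ fun j _ =>
              (l2mul_aux (hx2 i) (hx2 j)).const_mul _]
            refine Finset.sum_congr rfl fun i _ => ?_
            rw [integral_finset_sum _ fun j _ => (l2mul_aux (hx2 i) (hx2 j)).const_mul _]
            refine Finset.sum_congr rfl fun j _ => ?_
            rw [integral_const_mul, hS]
        _ = (Pᵀ * S * P) k l := by
            simp only [Matrix.mul_apply, Matrix.transpose_apply, Finset.sum_mul]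
            rw [Finset.sum_comm]
            exact Finset.sum_congr rfl fun i _ => Finset.sum_congr rfl fun j _ => by ring
    calc ∫ ω, (x ω ⬝ᵥ P.mulVec (u ω)) ^ 2 ∂μ
        = ∫ ω, ∑ k, ∑ l, (g k ω * g l ω) * (u ω k * u ω l) ∂μ :=
          integral_congr_ae (by filter_upwards with ω; rw [hkey ω])
      _ = ∑ k, ∑ l, (Pᵀ * S * P) k l * T k l := by
          rw [integral_finset_sum _ fun k _ => integrable_finset_sum _ fun l _ => hint k l]
          refine Finset.sum_congr rfl fun k _ => ?_
          rw [integral_finset_sum _ fun l _ => hint k l]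
          refine Finset.sum_congr rfl fun l _ => ?_
          rw [indep_int_mul_aux (hindkl k l) (hintg k l) (hintu k l), hgint, hT]

/-- in the random-effects single-task model with mutually independent
`β̄, ε, x_new, ε_new` (zero means, `E[β̄β̄ᵀ] = Ω/p`, `E[εεᵀ] = σ²I`, `E[x_new x_newᵀ] = Σ`,
`E[ε_new²] = σ²`), the predictive risk of the oracle generalized ridge estimator
`β̃ = (XᵀX + nλΩ⁻¹)⁻¹Xᵀy` (with `y = Xβ̄ + ε`, `y_new = x_newᵀβ̄ + ε_new`) equals
`σ² + (λ²/p)·tr(Σ M⁻¹ Ω⁻¹ M⁻¹) − (λσ²/n)·tr(Σ M⁻¹ Ω⁻¹ M⁻¹) + (σ²/n)·tr(Σ M⁻¹)`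
where `M = Σ̂ + λΩ⁻¹`, `Σ̂ = (1/n)XᵀX`. -/
theorem stmt_2
    {W : Type*} [MeasurableSpace W] (μ : Measure W) [IsProbabilityMeasure μ]
    (n p : ℕ) (hn : 0 < n) (hp : 0 < p)
    (X : Matrix (Fin n) (Fin p) ℝ)
    (Sg Om : Matrix (Fin p) (Fin p) ℝ) (hSg : Sg.PosDef) (hOm : Om.PosDef)
    (σ : ℝ) (hσ : 0 ≤ σ) (lam : ℝ) (hlam : 0 < lam)
    (B : W → Fin p → ℝ) (E : W → Fin n → ℝ) (xnew : W → Fin p → ℝ) (enew : W → ℝ)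
    (hB : Measurable B) (hE : Measurable E) (hx : Measurable xnew) (he : Measurable enew)
    (hB2 : ∀ i, MemLp (fun ω => B ω i) 2 μ)
    (hE2 : ∀ i, MemLp (fun ω => E ω i) 2 μ)
    (hx2 : ∀ i, MemLp (fun ω => xnew ω i) 2 μ)
    (he2 : MemLp enew 2 μ)
    (hIndep : iIndepFun (m := quadFamMeas n p) (quadFun B E xnew enew) μ)
    (hBmean : ∀ i, ∫ ω, B ω i ∂μ = 0)
    (hBcov : ∀ i j, ∫ ω, B ω i * B ω j ∂μ = Om i j / p)
    (hEmean : ∀ i, ∫ ω, E ω i ∂μ = 0)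
    (hEcov : ∀ i j, ∫ ω, E ω i * E ω j ∂μ = σ ^ 2 * (1 : Matrix (Fin n) (Fin n) ℝ) i j)
    (hxcov : ∀ i j, ∫ ω, xnew ω i * xnew ω j ∂μ = Sg i j)
    (hemean : ∫ ω, enew ω ∂μ = 0)
    (hevar : ∫ ω, (enew ω) ^ 2 ∂μ = σ ^ 2) :
    ∫ ω, ((xnew ω) ⬝ᵥ ((Xᵀ * X + ((n : ℝ) * lam) • Om⁻¹)⁻¹.mulVec
          (Xᵀ.mulVec (X.mulVec (B ω) + E ω)))
        - ((xnew ω) ⬝ᵥ (B ω) + enew ω)) ^ 2 ∂μ =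
      σ ^ 2
        + (lam ^ 2 / p) * Matrix.trace (Sg * ((n : ℝ)⁻¹ • (Xᵀ * X) + lam • Om⁻¹)⁻¹ * Om⁻¹ *
            ((n : ℝ)⁻¹ • (Xᵀ * X) + lam • Om⁻¹)⁻¹)
        - (lam * σ ^ 2 / n) * Matrix.trace (Sg * ((n : ℝ)⁻¹ • (Xᵀ * X) + lam • Om⁻¹)⁻¹ * Om⁻¹ *
            ((n : ℝ)⁻¹ • (Xᵀ * X) + lam • Om⁻¹)⁻¹)
        + (σ ^ 2 / n) * Matrix.trace (Sg * ((n : ℝ)⁻¹ • (Xᵀ * X) + lam • Om⁻¹)⁻¹) := by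
  classical
  have hnR : ((n : ℝ)) ≠ 0 := Nat.cast_ne_zero.mpr hn.ne'
  have hpR : ((p : ℝ)) ≠ 0 := Nat.cast_ne_zero.mpr hp.ne'
  set M : Matrix (Fin p) (Fin p) ℝ := (n : ℝ)⁻¹ • (Xᵀ * X) + lam • Om⁻¹ with hM
  -- matrix preliminaries
  have hOminv : (Om⁻¹).PosDef := hOm.inv
  have hXtX : (Xᵀ * X).PosSemidef := by
    have h := Matrix.posSemidef_conjTranspose_mul_self X
    have hXc : Xᴴ = Xᵀ := by ext i j; simp [Matrix.conjTranspose_apply]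
    rwa [hXc] at h
  have hS1 : ((n : ℝ)⁻¹ • (Xᵀ * X)).PosSemidef := by
    refine ⟨?_, fun v => ?_⟩
    · have h := hXtX.1
      unfold Matrix.IsHermitian at *
      rw [Matrix.conjTranspose_smul, h]
      simp
    · have h0 : (0:ℝ) ≤ (n : ℝ)⁻¹ := by positivity
      exact (hXtX.smul h0).2 v
  have hS2 : (lam • Om⁻¹).PosDef := by
    refine ⟨?_, fun v hv => ?_⟩
    · have h := hOminv.1
      unfold Matrix.IsHermitian at *
      rw [Matrix.conjTranspose_smul, h]
      simp
    · exact (hOminv.smul hlam).2 hv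
  have hMpd : M.PosDef := Matrix.PosDef.posSemidef_add hS1 hS2
  have hMdet : IsUnit M.det := hMpd.det_pos.ne'.isUnit
  have hMM : M⁻¹ * M = 1 := Matrix.nonsing_inv_mul M hMdet
  have hMM' : M * M⁻¹ = 1 := Matrix.mul_nonsing_inv M hMdet
  have hOO : Om⁻¹ * Om = 1 :=
    Matrix.nonsing_inv_mul Om (Matrix.isUnit_iff_isUnit_det Om |>.mp hOm.isUnit)
  have hN : Xᵀ * X + ((n : ℝ) * lam) • Om⁻¹ = (n : ℝ) • M := by
    rw [hM, smul_add, smul_smul, smul_smul, mul_inv_cancel₀ hnR, one_smul]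
  have hNinv : (Xᵀ * X + ((n : ℝ) * lam) • Om⁻¹)⁻¹ = (n : ℝ)⁻¹ • M⁻¹ := by
    rw [hN]
    apply Matrix.inv_eq_right_inv
    rw [Matrix.smul_mul, Matrix.mul_smul, hMM', smul_smul, mul_inv_cancel₀ hnR, one_smul]
  set K : Matrix (Fin p) (Fin n) ℝ := (n : ℝ)⁻¹ • (M⁻¹ * Xᵀ) with hK
  have hKX : K * X = 1 - lam • (M⁻¹ * Om⁻¹) := by
    have h1 : M⁻¹ * M = 1 := hMM
    rw [hM] at h1
    rw [Matrix.mul_add, Matrix.mul_smul, Matrix.mul_smul] at h1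
    rw [hK, Matrix.smul_mul, Matrix.mul_assoc]
    rw [← h1]
    abel
  have hOmT : Omᵀ = Om := by
    have h := hOm.1
    unfold Matrix.IsHermitian at h
    ext i j
    rw [Matrix.transpose_apply]
    nth_rewrite 2 [← h]
    simp [Matrix.conjTranspose_apply]
  have hOmiT : (Om⁻¹)ᵀ = Om⁻¹ := by rw [Matrix.transpose_nonsing_inv, hOmT]
  have hMT : Mᵀ = M := by
    rw [hM, Matrix.transpose_add, Matrix.transpose_smul, Matrix.transpose_smul,
      Matrix.transpose_mul, Matrix.transpose_transpose, hOmiT]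
  have hMiT : (M⁻¹)ᵀ = M⁻¹ := by rw [Matrix.transpose_nonsing_inv, hMT]
  set Amat : Matrix (Fin p) (Fin p) ℝ := -(lam • (M⁻¹ * Om⁻¹)) with hAmat
  have hKX' : K * X = 1 + Amat := by rw [hKX, hAmat]; abel
  have hAT : Amatᵀ = -(lam • (Om⁻¹ * M⁻¹)) := by
    rw [hAmat, Matrix.transpose_neg, Matrix.transpose_smul, Matrix.transpose_mul, hOmiT, hMiT]
  have hKT : Kᵀ = (n : ℝ)⁻¹ • (X * M⁻¹) := by
    rw [hK, Matrix.transpose_smul, Matrix.transpose_mul, Matrix.transpose_transpose, hMiT]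
  set tr0 : ℝ := Matrix.trace (Sg * M⁻¹ * Om⁻¹ * M⁻¹) with htr0
  set tr1 : ℝ := Matrix.trace (Sg * M⁻¹) with htr1
  have goal1 : Matrix.trace (Amatᵀ * Sg * Amat * Om) = lam ^ 2 * tr0 := by
    rw [hAT, hAmat]
    have hcollect : -(lam • (Om⁻¹ * M⁻¹)) * Sg * -(lam • (M⁻¹ * Om⁻¹)) * Om
        = (lam * lam) • (Om⁻¹ * M⁻¹ * (Sg * M⁻¹)) := by
      have h0 : -(lam • (Om⁻¹ * M⁻¹)) * Sg * -(lam • (M⁻¹ * Om⁻¹)) * Om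
          = (lam * lam) • (Om⁻¹ * M⁻¹ * Sg * (M⁻¹ * Om⁻¹) * Om) := by
        simp only [Matrix.neg_mul, Matrix.mul_neg, neg_neg, Matrix.smul_mul, Matrix.mul_smul,
          smul_neg, smul_smul]
      rw [h0]
      congr 1
      rw [Matrix.mul_assoc (Om⁻¹ * M⁻¹ * Sg), Matrix.mul_assoc M⁻¹, hOO, Matrix.mul_one,
        Matrix.mul_assoc]
    rw [hcollect, Matrix.trace_smul]
    have hcyc : Matrix.trace (Om⁻¹ * M⁻¹ * (Sg * M⁻¹)) = tr0 := by
      have h := Matrix.trace_mul_comm (Om⁻¹ * M⁻¹) (Sg * M⁻¹)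
      rw [htr0]
      simp only [Matrix.mul_assoc] at h ⊢
      exact h
    rw [hcyc, smul_eq_mul]
    ring
  have hXtXn : Xᵀ * X = (n : ℝ) • M - ((n : ℝ) * lam) • Om⁻¹ := by
    rw [← hN]; abel
  have goal2 : Matrix.trace (Kᵀ * Sg * K) = (n : ℝ)⁻¹ * tr1 - lam * (n : ℝ)⁻¹ * tr0 := by
    have e1 : Matrix.trace (M⁻¹ * Sg * M⁻¹ * M) = tr1 := by
      rw [Matrix.mul_assoc (M⁻¹ * Sg), hMM, Matrix.mul_one, Matrix.trace_mul_comm, htr1]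
    have e2 : Matrix.trace (M⁻¹ * Sg * M⁻¹ * Om⁻¹) = tr0 := by
      have h := Matrix.trace_mul_comm M⁻¹ (Sg * M⁻¹ * Om⁻¹)
      rw [htr0]
      simp only [Matrix.mul_assoc] at h ⊢
      exact h
    rw [hKT, hK, Matrix.smul_mul, Matrix.smul_mul, Matrix.mul_smul, smul_smul, Matrix.trace_smul]
    have hX1 : Matrix.trace (X * M⁻¹ * Sg * (M⁻¹ * Xᵀ))
        = Matrix.trace (M⁻¹ * Sg * M⁻¹ * (Xᵀ * X)) := by
      have h := Matrix.trace_mul_comm X (M⁻¹ * Sg * (M⁻¹ * Xᵀ))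
      have h2 : X * M⁻¹ * Sg * (M⁻¹ * Xᵀ) = X * (M⁻¹ * Sg * (M⁻¹ * Xᵀ)) := by
        simp only [Matrix.mul_assoc]
      have h3 : M⁻¹ * Sg * (M⁻¹ * Xᵀ) * X = M⁻¹ * Sg * M⁻¹ * (Xᵀ * X) := by
        simp only [Matrix.mul_assoc]
      rw [h2, h, h3]
    rw [hX1, hXtXn, Matrix.mul_sub, Matrix.mul_smul, Matrix.mul_smul, Matrix.trace_sub,
      Matrix.trace_smul, Matrix.trace_smul, e1, e2, smul_eq_mul, smul_eq_mul, smul_eq_mul]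
    field_simp
  -- probabilistic part
  have hfmeas : ∀ i, @Measurable W (quadFam n p i) _ (quadFamMeas n p i)
      (quadFun B E xnew enew i) := by
    intro i
    fin_cases i
    · exact hB
    · exact hE
    · exact hx
    · exact he
  have hxB : IndepFun xnew B μ := hIndep.indepFun (i := 2) (j := 0) (by decide)
  have hxE : IndepFun xnew E μ := hIndep.indepFun (i := 2) (j := 1) (by decide)
  have hxB_E : IndepFun (fun ω => (xnew ω, B ω)) E μ :=
    hIndep.indepFun_prodMk hfmeas 2 0 1 (by decide) (by decide)
  have hxB_e : IndepFun (fun ω => (xnew ω, B ω)) enew μ :=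
    hIndep.indepFun_prodMk hfmeas 2 0 3 (by decide) (by decide)
  have hxE_e : IndepFun (fun ω => (xnew ω, E ω)) enew μ :=
    hIndep.indepFun_prodMk hfmeas 2 1 3 (by decide) (by decide)
  -- the three pieces of the error
  set fa : W → ℝ := fun ω => xnew ω ⬝ᵥ Amat.mulVec (B ω) with hfa
  set fb : W → ℝ := fun ω => xnew ω ⬝ᵥ K.mulVec (E ω) with hfb
  -- pointwise identity
  have hpoint : ∀ ω, ((xnew ω) ⬝ᵥ ((Xᵀ * X + ((n : ℝ) * lam) • Om⁻¹)⁻¹.mulVec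
          (Xᵀ.mulVec (X.mulVec (B ω) + E ω)))
        - ((xnew ω) ⬝ᵥ (B ω) + enew ω)) = fa ω + fb ω - enew ω := by
    intro ω
    rw [hNinv, Matrix.mulVec_mulVec, Matrix.smul_mul, ← hK, Matrix.mulVec_add,
      Matrix.mulVec_mulVec, hKX', Matrix.add_mulVec, Matrix.one_mulVec, dotProduct_add,
      dotProduct_add, hfa, hfb]
    ring
  -- auxiliary linear functionals of xnew
  set gA : Fin p → W → ℝ := fun k ω => ∑ i, Amat i k * xnew ω i with hgA
  set gK : Fin n → W → ℝ := fun l ω => ∑ i, K i l * xnew ω i with hgK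
  have hgA2 : ∀ k, MemLp (gA k) 2 μ := fun k =>
    memLp_finset_sum _ (fun i _ => (hx2 i).const_mul (Amat i k))
  have hgK2 : ∀ l, MemLp (gK l) 2 μ := fun l =>
    memLp_finset_sum _ (fun i _ => (hx2 i).const_mul (K i l))
  have hfa_exp : ∀ ω, fa ω = ∑ k, gA k ω * B ω k := by
    intro ω
    rw [hfa]
    simp only [dotProduct, Matrix.mulVec, hgA, Finset.mul_sum, Finset.sum_mul]
    rw [Finset.sum_comm]
    exact Finset.sum_congr rfl fun k _ => Finset.sum_congr rfl fun i _ => by ring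
  have hfb_exp : ∀ ω, fb ω = ∑ l, gK l ω * E ω l := by
    intro ω
    rw [hfb]
    simp only [dotProduct, Matrix.mulVec, hgK, Finset.mul_sum, Finset.sum_mul]
    rw [Finset.sum_comm]
    exact Finset.sum_congr rfl fun l _ => Finset.sum_congr rfl fun i _ => by ring
  -- integrability of fa, fb
  have Ifa : Integrable fa μ := by
    have h : Integrable (fun ω => ∑ k, gA k ω * B ω k) μ :=
      integrable_finset_sum _ fun k _ => l2mul_aux (hgA2 k) (hB2 k)
    exact h.congr (by filter_upwards with ω; rw [hfa_exp ω])
  have Ifb : Integrable fb μ := by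
    have h : Integrable (fun ω => ∑ l, gK l ω * E ω l) μ :=
      integrable_finset_sum _ fun l _ => l2mul_aux (hgK2 l) (hE2 l)
    exact h.congr (by filter_upwards with ω; rw [hfb_exp ω])
  have Ienew : Integrable enew μ := he2.integrable one_le_two
  -- quadratic terms via the helper
  have hTB : ∀ k l, ∫ ω, B ω k * B ω l ∂μ = ((p : ℝ)⁻¹ • Om) k l := by
    intro k l
    rw [hBcov]
    simp [Matrix.smul_apply, div_eq_inv_mul]
  have hTE : ∀ k l, ∫ ω, E ω k * E ω l ∂μ = ((σ ^ 2) • (1 : Matrix (Fin n) (Fin n) ℝ)) k l := by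
    intro k l
    rw [hEcov]
    simp [Matrix.smul_apply]
  have hQA := quad_helper_aux μ xnew B hx2 hB2 hxB Sg ((p : ℝ)⁻¹ • Om) hxcov hTB Amat
  have hQK := quad_helper_aux μ xnew E hx2 hE2 hxE Sg ((σ ^ 2) • (1 : Matrix (Fin n) (Fin n) ℝ))
    hxcov hTE K
  have hsum1 : ∑ k, ∑ l, (Amatᵀ * Sg * Amat) k l * ((p : ℝ)⁻¹ • Om) k l
      = (p : ℝ)⁻¹ * Matrix.trace (Amatᵀ * Sg * Amat * Om) := by
    rw [← sum_mul_eq_trace_aux _ _ hOmT, Finset.mul_sum]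
    refine Finset.sum_congr rfl fun k _ => ?_
    rw [Finset.mul_sum]
    refine Finset.sum_congr rfl fun l _ => ?_
    simp only [Matrix.smul_apply, smul_eq_mul]
    ring
  have hsum2 : ∑ k, ∑ l, (Kᵀ * Sg * K) k l * ((σ ^ 2) • (1 : Matrix (Fin n) (Fin n) ℝ)) k l
      = σ ^ 2 * Matrix.trace (Kᵀ * Sg * K) := by
    have h1 : Matrix.trace (Kᵀ * Sg * K) = Matrix.trace (Kᵀ * Sg * K * 1) := by
      rw [Matrix.mul_one]
    rw [h1, ← sum_mul_eq_trace_aux _ _ Matrix.transpose_one, Finset.mul_sum]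
    refine Finset.sum_congr rfl fun k _ => ?_
    rw [Finset.mul_sum]
    refine Finset.sum_congr rfl fun l _ => ?_
    simp only [Matrix.smul_apply, smul_eq_mul]
    ring
  have hIaa : Integrable (fun ω => fa ω ^ 2) μ := hQA.1
  have hIbb : Integrable (fun ω => fb ω ^ 2) μ := hQK.1
  have hIcc : Integrable (fun ω => enew ω ^ 2) μ := by
    refine (l2mul_aux he2 he2).congr ?_
    filter_upwards with ω
    rw [sq]
  have hVaa : ∫ ω, fa ω ^ 2 ∂μ = (p : ℝ)⁻¹ * (lam ^ 2 * tr0) := by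
    rw [hfa]
    rw [hQA.2, hsum1, goal1]
  have hVbb : ∫ ω, fb ω ^ 2 ∂μ = σ ^ 2 * ((n : ℝ)⁻¹ * tr1 - lam * (n : ℝ)⁻¹ * tr0) := by
    rw [hfb]
    rw [hQK.2, hsum2, goal2]
  -- cross term fa * fb
  have hIabint : ∀ l : Fin n, Integrable (fun ω => fa ω * gK l ω) μ := by
    intro l
    have hexp : ∀ ω, fa ω * gK l ω = ∑ k, (gA k ω * gK l ω) * B ω k := by
      intro ω
      rw [hfa_exp ω, Finset.sum_mul]
      exact Finset.sum_congr rfl fun k _ => by ring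
    have h : Integrable (fun ω => ∑ k, (gA k ω * gK l ω) * B ω k) μ := by
      refine integrable_finset_sum _ fun k _ => ?_
      have hind : IndepFun (fun ω => gA k ω * gK l ω) (fun ω => B ω k) μ := by
        have hφ : Measurable (fun v : Fin p → ℝ => (∑ i, Amat i k * v i) * (∑ i, K i l * v i)) :=
          (measurable_lin_aux _).mul (measurable_lin_aux _)
        exact hxB.comp hφ (measurable_pi_apply k)
      exact hind.integrable_mul (l2mul_aux (hgA2 k) (hgK2 l)) ((hB2 k).integrable one_le_two)
    exact h.congr (by filter_upwards with ω; rw [hexp ω])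
  have hIab_indep : ∀ l : Fin n, IndepFun (fun ω => fa ω * gK l ω) (fun ω => E ω l) μ := by
    intro l
    have hφ : Measurable (fun vw : (Fin p → ℝ) × (Fin p → ℝ) =>
        (vw.1 ⬝ᵥ Amat.mulVec vw.2) * (∑ i, K i l * vw.1 i)) := by
      exact (measurable_dotmul_aux Amat).mul ((measurable_lin_aux _).comp measurable_fst)
    exact hxB_E.comp hφ (measurable_pi_apply l)
  have hIabl : ∀ l : Fin n, Integrable (fun ω => (fa ω * gK l ω) * E ω l) μ := fun l =>
    (hIab_indep l).integrable_mul (hIabint l) ((hE2 l).integrable one_le_two)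
  have hab_exp : ∀ ω, fa ω * fb ω = ∑ l, (fa ω * gK l ω) * E ω l := by
    intro ω
    rw [hfb_exp ω, Finset.mul_sum]
    exact Finset.sum_congr rfl fun l _ => by ring
  have hIab : Integrable (fun ω => fa ω * fb ω) μ := by
    have h : Integrable (fun ω => ∑ l, (fa ω * gK l ω) * E ω l) μ :=
      integrable_finset_sum _ fun l _ => hIabl l
    exact h.congr (by filter_upwards with ω; rw [hab_exp ω])
  have hVab : ∫ ω, fa ω * fb ω ∂μ = 0 := by
    calc ∫ ω, fa ω * fb ω ∂μ = ∫ ω, ∑ l, (fa ω * gK l ω) * E ω l ∂μ :=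
          integral_congr_ae (by filter_upwards with ω; rw [hab_exp ω])
      _ = 0 := by
          rw [integral_finset_sum _ fun l _ => hIabl l]
          refine Finset.sum_eq_zero fun l _ => ?_
          rw [indep_int_mul_aux (hIab_indep l) (hIabint l) ((hE2 l).integrable one_le_two),
            hEmean l, mul_zero]
  -- cross term fa * enew
  have hfa_indep_e : IndepFun fa enew μ := by
    have h := hxB_e.comp (measurable_dotmul_aux Amat) measurable_id
    exact h
  have hIac : Integrable (fun ω => fa ω * enew ω) μ := hfa_indep_e.integrable_mul Ifa Ienew
  have hVac : ∫ ω, fa ω * enew ω ∂μ = 0 := by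
    rw [indep_int_mul_aux hfa_indep_e Ifa Ienew, hemean, mul_zero]
  -- cross term fb * enew
  have hfb_indep_e : IndepFun fb enew μ := by
    have h := hxE_e.comp (measurable_dotmul_aux K) measurable_id
    exact h
  have hIbc : Integrable (fun ω => fb ω * enew ω) μ := hfb_indep_e.integrable_mul Ifb Ienew
  have hVbc : ∫ ω, fb ω * enew ω ∂μ = 0 := by
    rw [indep_int_mul_aux hfb_indep_e Ifb Ienew, hemean, mul_zero]
  -- assemble
  have hmain : ∫ ω, ((xnew ω) ⬝ᵥ ((Xᵀ * X + ((n : ℝ) * lam) • Om⁻¹)⁻¹.mulVec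
          (Xᵀ.mulVec (X.mulVec (B ω) + E ω)))
        - ((xnew ω) ⬝ᵥ (B ω) + enew ω)) ^ 2 ∂μ
      = ∫ ω, (fa ω ^ 2 + fb ω ^ 2 + enew ω ^ 2 + 2 * (fa ω * fb ω)
          - 2 * (fa ω * enew ω) - 2 * (fb ω * enew ω)) ∂μ := by
    refine integral_congr_ae ?_
    filter_upwards with ω
    rw [hpoint ω]
    ring
  rw [hmain]
  have hI12 : Integrable (fun ω => fa ω ^ 2 + fb ω ^ 2) μ := hIaa.add hIbb
  have hI123 : Integrable (fun ω => fa ω ^ 2 + fb ω ^ 2 + enew ω ^ 2) μ := hI12.add hIcc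
  have hI4 : Integrable (fun ω => 2 * (fa ω * fb ω)) μ := hIab.const_mul 2
  have hI1234 : Integrable (fun ω => fa ω ^ 2 + fb ω ^ 2 + enew ω ^ 2 + 2 * (fa ω * fb ω)) μ :=
    hI123.add hI4
  have hI5 : Integrable (fun ω => 2 * (fa ω * enew ω)) μ := hIac.const_mul 2
  have hI12345 : Integrable (fun ω => fa ω ^ 2 + fb ω ^ 2 + enew ω ^ 2 + 2 * (fa ω * fb ω)
      - 2 * (fa ω * enew ω)) μ := hI1234.sub hI5
  have hI6 : Integrable (fun ω => 2 * (fb ω * enew ω)) μ := hIbc.const_mul 2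
  rw [integral_sub hI12345 hI6, integral_sub hI1234 hI5, integral_add hI123 hI4,
      integral_add hI12 hIcc, integral_add hIaa hIbb]
  rw [integral_const_mul, integral_const_mul, integral_const_mul]
  rw [hVaa, hVbb, hevar, hVab, hVac, hVbc]
  rw [htr0, htr1]
  field_simp
  ring
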